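/- arXiv:2210.06064 — 2 statements merged into one kernel-verified Lean document; each statement's English description precedes it below -/
import Mathlib

section
/- Let (X,d) be a quasi cone metric space in which every backward convergent sequence is also forward convergent (to the same limit). Then the backward topology T_b on X is Hausdorff. -/
open TopologicalSpace

/-- A quasi cone metric space on `X` with values in a real Banach space `E`,
ordered by a cone `P` with nonempty interior. -/
structure QCMS (X : Type*) (E : Type*) [NormedAddCommGroup E] [NormedSpace ℝ E] : Type _ where
  P : Set E
  P_closed : IsClosed P
  P_ne : P ≠ {0}
  P_nonempty : P.Nonempty
  P_smul_add : ∀ ⦃x⦄, x ∈ P → ∀ ⦃y⦄, y ∈ P → ∀ s t : ℝ, 0 ≤ s → 0 ≤ t → s • x + t • y ∈ P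
  P_eq_zero : ∀ x, x ∈ P → -x ∈ P → x = 0
  P_int : (interior P).Nonempty
  d : X → X → E
  d_mem : ∀ x y, d x y ∈ P
  d_eq_zero_iff : ∀ x y, d x y = 0 ↔ x = y
  triangle : ∀ x y z, d x z + d z y - d x y ∈ P

namespace QCMS

variable {X E : Type*} [NormedAddCommGroup E] [NormedSpace ℝ E]

/-- `a ≪ b` : `b - a` lies in the interior of the cone. -/
def lt' (Q : QCMS X E) (a b : E) : Prop := b - a ∈ interior Q.P

/-- Forward open ball. -/
def ballF (Q : QCMS X E) (x : X) (u : E) : Set X := {y | Q.lt' (Q.d x y) u}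

/-- Backward open ball. -/
def ballB (Q : QCMS X E) (x : X) (u : E) : Set X := {y | Q.lt' (Q.d y x) u}

/-- The forward topology, generated by forward open balls. -/
def Tf (Q : QCMS X E) : TopologicalSpace X :=
  generateFrom {s | ∃ x u, u ∈ interior Q.P ∧ s = Q.ballF x u}

/-- The backward topology, generated by backward open balls. -/
def Tb (Q : QCMS X E) : TopologicalSpace X :=
  generateFrom {s | ∃ x u, u ∈ interior Q.P ∧ s = Q.ballB x u}

/-- Forward convergence of a sequence. -/
def FConv (Q : QCMS X E) (x : ℕ → X) (a : X) : Prop :=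
  ∀ u ∈ interior Q.P, ∃ N, ∀ n ≥ N, Q.lt' (Q.d a (x n)) u

/-- Backward convergence of a sequence. -/
def BConv (Q : QCMS X E) (x : ℕ → X) (a : X) : Prop :=
  ∀ u ∈ interior Q.P, ∃ N, ∀ n ≥ N, Q.lt' (Q.d (x n) a) u

/-- Forward Cauchy sequence. -/
def FCauchy (Q : QCMS X E) (x : ℕ → X) : Prop :=
  ∀ u ∈ interior Q.P, ∃ N, ∀ m n, N ≤ m → m ≤ n → Q.lt' (Q.d (x m) (x n)) u

/-- Forward sequential compactness of the whole space. -/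
def FSeqCompact (Q : QCMS X E) : Prop :=
  ∀ x : ℕ → X, ∃ (a : X) (φ : ℕ → ℕ), StrictMono φ ∧ Q.FConv (x ∘ φ) a

/-- Forward total boundedness of the whole space. -/
def FTotallyBounded (Q : QCMS X E) : Prop :=
  ∀ u ∈ interior Q.P, ∃ t : Finset X, ∀ y : X, ∃ c ∈ t, y ∈ Q.ballF c u

/-- Forward completeness. -/
def FComplete (Q : QCMS X E) : Prop :=
  ∀ x : ℕ → X, Q.FCauchy x → ∃ a, Q.FConv x a

end QCMS


section Aux

variable {X E : Type*} [NormedAddCommGroup E] [NormedSpace ℝ E]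

lemma QCMS.add_mem' (Q : QCMS X E) {a b : E} (ha : a ∈ Q.P) (hb : b ∈ Q.P) :
    a + b ∈ Q.P := by
  have := Q.P_smul_add ha hb 1 1 zero_le_one zero_le_one
  simpa using this

lemma QCMS.int_add_mem (Q : QCMS X E) {a b : E} (ha : a ∈ interior Q.P) (hb : b ∈ Q.P) :
    a + b ∈ interior Q.P := by
  have hsub : (fun c => c + b) '' interior Q.P ⊆ Q.P := by
    rintro _ ⟨c, hc, rfl⟩
    exact Q.add_mem' (interior_subset hc) hb
  have hopen : IsOpen ((fun c => c + b) '' interior Q.P) :=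
    (Homeomorph.addRight b).isOpenMap _ isOpen_interior
  exact interior_maximal hsub hopen ⟨a, ha, rfl⟩

lemma QCMS.int_add_int (Q : QCMS X E) {a b : E} (ha : a ∈ interior Q.P)
    (hb : b ∈ interior Q.P) : a + b ∈ interior Q.P :=
  Q.int_add_mem ha (interior_subset hb)

lemma QCMS.smul_int (Q : QCMS X E) {a : E} {t : ℝ} (ht : 0 < t) (ha : a ∈ interior Q.P) :
    t • a ∈ interior Q.P := by
  have hsub : (t • ·) '' interior Q.P ⊆ Q.P := by
    rintro _ ⟨c, hc, rfl⟩
    have := Q.P_smul_add (interior_subset hc) (interior_subset hc) t 0 ht.le le_rfl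
    simpa using this
  have hopen : IsOpen ((t • ·) '' interior Q.P) :=
    (Homeomorph.smulOfNeZero t ht.ne').isOpenMap _ isOpen_interior
  exact interior_maximal hsub hopen ⟨a, ha, rfl⟩

/-- Key lemma: if all pairs of backward balls around `x` and `y` intersect,
then `x = y`. -/
lemma QCMS.eq_of_balls_intersect (Q : QCMS X E)
    (h : ∀ (x : ℕ → X) (a : X), Q.BConv x a → Q.FConv x a) (x y : X)
    (hint : ∀ u ∈ interior Q.P, ∀ v ∈ interior Q.P,
      (Q.ballB x u ∩ Q.ballB y v).Nonempty) : x = y := by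
  obtain ⟨e, he⟩ := Q.P_int
  set en : ℕ → E := fun n => (1 / (n + 1) : ℝ) • e with hen
  have hen_mem : ∀ n, en n ∈ interior Q.P := fun n =>
    Q.smul_int (by positivity) he
  -- choose points in intersections
  have hz : ∀ n : ℕ, ∃ z : X, z ∈ Q.ballB x (en n) ∩ Q.ballB y (en n) := fun n =>
    hint (en n) (hen_mem n) (en n) (hen_mem n)
  choose z hzx hzy using hz
  -- en eventually dominated by any interior point
  have hsmall : ∀ v ∈ interior Q.P, ∃ N, ∀ n ≥ N, v - en n ∈ interior Q.P := by
    intro v hv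
    have htend : Filter.Tendsto (fun n : ℕ => v - en n) Filter.atTop (nhds v) := by
      have h0 : Filter.Tendsto (fun n : ℕ => en n) Filter.atTop (nhds 0) := by
        have := tendsto_one_div_add_atTop_nhds_zero_nat (𝕜 := ℝ)
        have := this.smul_const e
        simpa [hen] using this
      simpa using (tendsto_const_nhds (x := v)).sub h0
    have := htend.eventually (isOpen_interior.mem_nhds hv)
    exact Filter.eventually_atTop.mp this
  -- z backward converges to x and to y
  have hbx : Q.BConv z x := by
    intro v hv
    obtain ⟨N, hN⟩ := hsmall v hv
    refine ⟨N, fun n hn => ?_⟩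
    have h1 : en n - Q.d (z n) x ∈ interior Q.P := hzx n
    have h2 : v - en n ∈ interior Q.P := hN n hn
    have := Q.int_add_int h2 h1
    simpa [QCMS.lt', sub_add_sub_cancel] using this
  have hby : Q.BConv z y := by
    intro v hv
    obtain ⟨N, hN⟩ := hsmall v hv
    refine ⟨N, fun n hn => ?_⟩
    have h1 : en n - Q.d (z n) y ∈ interior Q.P := hzy n
    have h2 : v - en n ∈ interior Q.P := hN n hn
    have := Q.int_add_int h2 h1
    simpa [QCMS.lt', sub_add_sub_cancel] using this
  -- forward convergence to x
  have hfx : Q.FConv z x := h z x hbx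
  -- for every interior w, w - d x y ∈ P
  have hkey : ∀ w ∈ interior Q.P, w - Q.d x y ∈ Q.P := by
    intro w hw
    have hv : (1 / 2 : ℝ) • w ∈ interior Q.P := Q.smul_int (by norm_num) hw
    obtain ⟨N₁, hN₁⟩ := hfx _ hv
    obtain ⟨N₂, hN₂⟩ := hby _ hv
    set n := max N₁ N₂
    have h1 : (1 / 2 : ℝ) • w - Q.d x (z n) ∈ interior Q.P := hN₁ n (le_max_left _ _)
    have h2 : (1 / 2 : ℝ) • w - Q.d (z n) y ∈ interior Q.P := hN₂ n (le_max_right _ _)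
    have h3 : Q.d x (z n) + Q.d (z n) y - Q.d x y ∈ Q.P := Q.triangle x y (z n)
    have h4 := Q.add_mem' (interior_subset (Q.int_add_int h1 h2)) h3
    have heq : ((1 / 2 : ℝ) • w - Q.d x (z n) + ((1 / 2 : ℝ) • w - Q.d (z n) y)) +
        (Q.d x (z n) + Q.d (z n) y - Q.d x y) = w - Q.d x y := by
      module
    rwa [heq] at h4
  -- take w = en n and let n → ∞
  have hmem : ∀ n, en n - Q.d x y ∈ Q.P := fun n => hkey (en n) (hen_mem n)
  have htend : Filter.Tendsto (fun n : ℕ => en n - Q.d x y) Filter.atTop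
      (nhds (-Q.d x y)) := by
    have h0 : Filter.Tendsto (fun n : ℕ => en n) Filter.atTop (nhds 0) := by
      have := tendsto_one_div_add_atTop_nhds_zero_nat (𝕜 := ℝ)
      have := this.smul_const e
      simpa [hen] using this
    simpa using h0.sub (tendsto_const_nhds (x := Q.d x y))
  have hneg : -Q.d x y ∈ Q.P :=
    Q.P_closed.mem_of_tendsto htend (Filter.Eventually.of_forall hmem)
  have : Q.d x y = 0 := Q.P_eq_zero _ (Q.d_mem x y) hneg
  exact (Q.d_eq_zero_iff x y).mp this

end Aux

/-- if backward convergence implies forward convergence,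
the backward topology is Hausdorff. -/
theorem backward_topology_t2 {X E : Type*} [NormedAddCommGroup E] [NormedSpace ℝ E]
    (Q : QCMS X E) (h : ∀ (x : ℕ → X) (a : X), Q.BConv x a → Q.FConv x a) :
    @T2Space X Q.Tb := by
  letI := Q.Tb
  constructor
  intro a b hab
  by_contra hcon
  push_neg at hcon
  apply hab
  apply Q.eq_of_balls_intersect h a b
  intro u hu v hv
  have hopenU : IsOpen (Q.ballB a u) := by
    apply TopologicalSpace.isOpen_generateFrom_of_mem
    exact ⟨a, u, hu, rfl⟩
  have hopenV : IsOpen (Q.ballB b v) := by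
    apply TopologicalSpace.isOpen_generateFrom_of_mem
    exact ⟨b, v, hv, rfl⟩
  have haU : a ∈ Q.ballB a u := by
    simp [QCMS.ballB, QCMS.lt', (Q.d_eq_zero_iff a a).mpr rfl, hu]
  have hbV : b ∈ Q.ballB b v := by
    simp [QCMS.ballB, QCMS.lt', (Q.d_eq_zero_iff b b).mpr rfl, hv]
  rcases Set.not_disjoint_iff.mp (fun hd => hcon _ _ hopenU hopenV haU hbV hd)
    with ⟨c, hc1, hc2⟩
  exact ⟨c, hc1, hc2⟩
end

section
/- Let (X,d) be a quasi cone metric space in which forward convergence implies backward convergence. Then every forward compact subset K ⊆ X is backward totally bounded, i.e., for every u ∈ P° there exist finitely many points y_1,…,y_n ∈ K such that K ⊆ ⋃ B_b(y_j,u). -/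
open TopologicalSpace

namespace QCMS

variable {X E : Type*} [NormedAddCommGroup E] [NormedSpace ℝ E]

lemma smulP (Q : QCMS X E) {t : ℝ} (ht : 0 ≤ t) {a : E} (ha : a ∈ Q.P) :
    t • a ∈ Q.P := by
  have := Q.P_smul_add ha ha t 0 ht le_rfl
  simpa using this

lemma addP (Q : QCMS X E) {a b : E} (ha : a ∈ Q.P) (hb : b ∈ Q.P) :
    a + b ∈ Q.P := by
  have := Q.P_smul_add ha hb 1 1 zero_le_one zero_le_one
  simpa using this

lemma int_add_P (Q : QCMS X E) {a b : E} (ha : a ∈ interior Q.P) (hb : b ∈ Q.P) :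
    a + b ∈ interior Q.P := by
  rw [mem_interior]
  refine ⟨(fun x => x - b) ⁻¹' interior Q.P, ?_, ?_, ?_⟩
  · intro x hx
    have : (x - b) + b ∈ Q.P := Q.addP (interior_subset hx) hb
    simpa using this
  · exact isOpen_interior.preimage (continuous_id.sub continuous_const)
  · simpa using ha

lemma smul_int_s13 (Q : QCMS X E) {t : ℝ} (ht : 0 < t) {a : E}
    (ha : a ∈ interior Q.P) : t • a ∈ interior Q.P := by
  rw [mem_interior]
  refine ⟨(fun x => t⁻¹ • x) ⁻¹' interior Q.P, ?_, ?_, ?_⟩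
  · intro x hx
    have h1 : t⁻¹ • x ∈ Q.P := interior_subset hx
    have h2 := Q.smulP ht.le h1
    rwa [smul_smul, mul_inv_cancel₀ ht.ne', one_smul] at h2
  · exact isOpen_interior.preimage (continuous_const_smul _)
  · have : t⁻¹ • t • a = a := by rw [smul_smul, inv_mul_cancel₀ ht.ne', one_smul]
    simpa [this] using ha

/-- Key lemma: under the hypothesis that forward convergence implies backward
convergence, every backward ball contains a forward ball with the same center. -/
lemma exists_forward_ball_subset (Q : QCMS X E)
    (h : ∀ (x : ℕ → X) (a : X), Q.FConv x a → Q.BConv x a)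
    (a : X) {u : E} (hu : u ∈ interior Q.P) :
    ∃ v ∈ interior Q.P, Q.ballF a v ⊆ Q.ballB a u := by
  by_contra hc
  push_neg at hc
  obtain ⟨u₀, hu₀⟩ := Q.P_int
  have hv : ∀ n : ℕ, ((n : ℝ) + 1)⁻¹ • u₀ ∈ interior Q.P := fun n =>
    Q.smul_int_s13 (by positivity) hu₀
  have hc' : ∀ n : ℕ, ∃ y, y ∈ Q.ballF a (((n : ℝ) + 1)⁻¹ • u₀) ∧
      y ∉ Q.ballB a u := fun n =>
    Set.not_subset.mp (hc _ (hv n))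
  choose y hy1 hy2 using hc'
  have hF : Q.FConv y a := by
    intro w hw
    have h0 : Filter.Tendsto (fun n : ℕ => w - ((n : ℝ) + 1)⁻¹ • u₀)
        Filter.atTop (nhds w) := by
      have h1 : Filter.Tendsto (fun n : ℕ => ((n : ℝ) + 1)⁻¹) Filter.atTop (nhds 0) := by
        simpa [one_div] using tendsto_one_div_add_atTop_nhds_zero_nat (𝕜 := ℝ)
      have h2 : Filter.Tendsto (fun n : ℕ => ((n : ℝ) + 1)⁻¹ • u₀)
          Filter.atTop (nhds ((0 : ℝ) • u₀)) := h1.smul_const u₀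
      simpa using (tendsto_const_nhds (x := w)).sub h2
    have hev : ∀ᶠ n : ℕ in Filter.atTop,
        w - ((n : ℝ) + 1)⁻¹ • u₀ ∈ interior Q.P :=
      h0.eventually (isOpen_interior.eventually_mem hw)
    obtain ⟨N, hN⟩ := Filter.eventually_atTop.mp hev
    refine ⟨N, fun n hn => ?_⟩
    have key : w - Q.d a (y n) =
        (w - ((n : ℝ) + 1)⁻¹ • u₀) + (((n : ℝ) + 1)⁻¹ • u₀ - Q.d a (y n)) := by
      abel
    have : w - Q.d a (y n) ∈ interior Q.P := by
      rw [key]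
      exact Q.int_add_P (hN n hn) (interior_subset (hy1 n))
    exact this
  obtain ⟨N, hN⟩ := h y a hF u hu
  exact hy2 N (hN N le_rfl)

end QCMS

/-- if forward convergence implies backward convergence, every forward
compact set is backward totally bounded. -/
theorem backward_totallyBounded_of_forward_compact {X E : Type*} [NormedAddCommGroup E]
    [NormedSpace ℝ E] (Q : QCMS X E)
    (h : ∀ (x : ℕ → X) (a : X), Q.FConv x a → Q.BConv x a)
    (K : Set X) (hK : @IsCompact X Q.Tf K) :
    ∀ u ∈ interior Q.P, ∃ t : Finset X, ↑t ⊆ K ∧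
      ∀ y ∈ K, ∃ c ∈ t, y ∈ Q.ballB c u := by
  intro u hu
  letI := Q.Tf
  choose v hv1 hv2 using fun a : X => Q.exists_forward_ball_subset h a hu
  have hcov : K ⊆ ⋃ a ∈ K, Q.ballF a (v a) := by
    intro z hz
    refine Set.mem_iUnion₂.mpr ⟨z, hz, ?_⟩
    have : Q.d z z = 0 := (Q.d_eq_zero_iff z z).mpr rfl
    simp only [QCMS.ballF, QCMS.lt', Set.mem_setOf_eq, this, sub_zero]
    exact hv1 z
  have hopen : ∀ a ∈ K, IsOpen (Q.ballF a (v a)) := fun a _ =>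
    TopologicalSpace.isOpen_generateFrom_of_mem ⟨a, v a, hv1 a, rfl⟩
  obtain ⟨b', hb'K, hfin, hsub⟩ := hK.elim_finite_subcover_image hopen hcov
  refine ⟨hfin.toFinset, by simpa using hb'K, ?_⟩
  intro z hz
  obtain ⟨c, hc, hzc⟩ := Set.mem_iUnion₂.mp (hsub hz)
  exact ⟨c, by simpa using hc, hv2 c hzc⟩
end
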